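/- For z ∈ (-1,1), the function g(z) = x̄(z) - z is strictly decreasing, where x̄(z) = (1/M(z)) ∫_{-1}^{z} 2x√(1-x²) dx and M(z) = ∫_{-1}^{z} 2√(1-x²) dx. In particular, its derivative satisfies g'(z) = 3·(x̄(z)² - z·x̄(z))/(1-z²) - 1 ≤ -1/4 < 0. -/

import Mathlib

open Real intervalIntegral

/-- Area of the portion of the unit disk with first coordinate at most `z`. -/
noncomputable def diskMass (z : ℝ) : ℝ := ∫ x in (-1 : ℝ)..z, 2 * Real.sqrt (1 - x ^ 2)

/-- `x`-coordinate of the centroid of the portion of the unit disk with `x ≤ z`. -/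
noncomputable def diskCentroid (z : ℝ) : ℝ :=
  (∫ x in (-1 : ℝ)..z, 2 * x * Real.sqrt (1 - x ^ 2)) / diskMass z

/-- Moment of inertia about its centroid of the portion of the unit disk with `x ≤ z`. -/
noncomputable def diskInertia (z : ℝ) : ℝ :=
  ∫ x in (-1 : ℝ)..z, ∫ y in (-Real.sqrt (1 - x ^ 2))..Real.sqrt (1 - x ^ 2),
    (y ^ 2 + (x - diskCentroid z) ^ 2)

lemma contSqrt : Continuous fun x : ℝ => Real.sqrt (1 - x ^ 2) :=
  (continuous_const.sub (continuous_pow 2)).sqrt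

lemma contMassInt : Continuous fun x : ℝ => 2 * Real.sqrt (1 - x ^ 2) :=
  continuous_const.mul contSqrt

lemma contMomInt : Continuous fun x : ℝ => 2 * x * Real.sqrt (1 - x ^ 2) :=
  (continuous_const.mul continuous_id).mul contSqrt

lemma diskMass_pos {z : ℝ} (hz : -1 < z) (hz1 : z ≤ 1) : 0 < diskMass z := by
  refine intervalIntegral.intervalIntegral_pos_of_pos_on
    (contMassInt.intervalIntegrable _ _) (fun x hx => ?_) hz
  have hx1 : -1 < x := hx.1
  have hx2 : x < 1 := lt_of_lt_of_le hx.2 hz1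
  have : 0 < 1 - x ^ 2 := by nlinarith
  positivity

/-- closed form of the moment integral -/
lemma momInt_eq {z : ℝ} (hz : -1 ≤ z) (hz1 : z ≤ 1) :
    (∫ x in (-1 : ℝ)..z, 2 * x * Real.sqrt (1 - x ^ 2))
      = -(2 / 3) * Real.sqrt (1 - z ^ 2) ^ 3 := by
  have key : (∫ x in (-1 : ℝ)..z, 2 * x * Real.sqrt (1 - x ^ 2))
      = (-(2 / 3) * Real.sqrt (1 - z ^ 2) ^ 3) - (-(2 / 3) * Real.sqrt (1 - (-1 : ℝ) ^ 2) ^ 3) := by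
    refine intervalIntegral.integral_eq_sub_of_hasDeriv_right_of_le hz
      (f := fun x => -(2 / 3) * Real.sqrt (1 - x ^ 2) ^ 3)
      ((continuous_const.mul (contSqrt.pow 3)).continuousOn) (fun x hx => ?_)
      (contMomInt.intervalIntegrable _ _)
    have hx1 : -1 < x := hx.1
    have hx2 : x < 1 := lt_of_lt_of_le hx.2 hz1
    have hpos : 0 < 1 - x ^ 2 := by nlinarith
    have hs : 0 < Real.sqrt (1 - x ^ 2) := Real.sqrt_pos.2 hpos
    have h1 : HasDerivAt (fun x : ℝ => 1 - x ^ 2) (-(2 * x)) x := by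
      simpa using ((hasDerivAt_pow 2 x).const_sub 1)
    have h2 : HasDerivAt (fun x : ℝ => Real.sqrt (1 - x ^ 2))
        (-(2 * x) / (2 * Real.sqrt (1 - x ^ 2))) x := h1.sqrt hpos.ne'
    have h3 : HasDerivAt (fun x : ℝ => -(2 / 3) * Real.sqrt (1 - x ^ 2) ^ 3)
        (-(2 / 3) * ((3 : ℕ) * Real.sqrt (1 - x ^ 2) ^ 2 *
          (-(2 * x) / (2 * Real.sqrt (1 - x ^ 2))))) x := (h2.pow 3).const_mul _
    have hsq : Real.sqrt (1 - x ^ 2) ^ 2 = 1 - x ^ 2 := Real.sq_sqrt hpos.le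
    have heq : -(2 / 3) * ((3 : ℕ) * Real.sqrt (1 - x ^ 2) ^ 2 *
          (-(2 * x) / (2 * Real.sqrt (1 - x ^ 2)))) = 2 * x * Real.sqrt (1 - x ^ 2) := by
      field_simp
      norm_num
    rw [heq] at h3
    exact h3.hasDerivWithinAt
  simpa using key

lemma diskCentroid_eq {z : ℝ} (hz : -1 ≤ z) (hz1 : z ≤ 1) :
    diskCentroid z = -(2 / 3) * Real.sqrt (1 - z ^ 2) ^ 3 / diskMass z := by
  rw [diskCentroid, momInt_eq hz hz1]

/-- the centroid is at least the midpoint `(z-1)/2` : the key integral inequality -/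
lemma momInt_ge {z : ℝ} (hz : -1 ≤ z) (hz1 : z ≤ 1) :
    (z - 1) / 2 * diskMass z ≤ ∫ x in (-1 : ℝ)..z, 2 * x * Real.sqrt (1 - x ^ 2) := by
  set m : ℝ := (z - 1) / 2 with hm
  set w : ℝ := (z + 1) / 2 with hw
  have hw0 : 0 ≤ w := by simp [hw]; linarith
  have hm0 : m ≤ 0 := by simp [hm]; linarith
  have hdiff : 0 ≤ (∫ x in (-1 : ℝ)..z, 2 * x * Real.sqrt (1 - x ^ 2))
      - m * diskMass z := by
    have hsub : (∫ x in (-1 : ℝ)..z, 2 * x * Real.sqrt (1 - x ^ 2))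
        - m * diskMass z
        = ∫ x in (-1 : ℝ)..z, (2 * x - 2 * m) * Real.sqrt (1 - x ^ 2) := by
      rw [diskMass, ← intervalIntegral.integral_const_mul,
        ← intervalIntegral.integral_sub (contMomInt.intervalIntegrable _ _)
          ((continuous_const.mul contMassInt).intervalIntegrable _ _) (g := fun x => m * (2 * Real.sqrt (1 - x ^ 2)))]
      congr 1; ext x; ring
    rw [hsub]
    have hcomp : (∫ x in (-1 : ℝ)..z, (2 * x - 2 * m) * Real.sqrt (1 - x ^ 2))
        = ∫ u in (-w)..w, 2 * u * Real.sqrt (1 - (u + m) ^ 2) := by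
      have := intervalIntegral.integral_comp_add_right
        (a := -w) (b := w) (fun x => (2 * x - 2 * m) * Real.sqrt (1 - x ^ 2)) m
      have e1 : -w + m = -1 := by rw [hw, hm]; ring
      have e2 : w + m = z := by rw [hw, hm]; ring
      rw [e1, e2] at this
      rw [← this]
      congr 1; ext u
      have : 2 * (u + m) - 2 * m = 2 * u := by ring
      rw [this]
    rw [hcomp]
    have hcont1 : Continuous fun u : ℝ => 2 * u * Real.sqrt (1 - (u + m) ^ 2) := by
      exact (continuous_const.mul continuous_id).mul
        ((continuous_const.sub ((continuous_id.add continuous_const).pow 2)).sqrt)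
    have hsplit : (∫ u in (-w)..w, 2 * u * Real.sqrt (1 - (u + m) ^ 2))
        = (∫ u in (-w)..(0:ℝ), 2 * u * Real.sqrt (1 - (u + m) ^ 2))
          + ∫ u in (0:ℝ)..w, 2 * u * Real.sqrt (1 - (u + m) ^ 2) := by
      rw [intervalIntegral.integral_add_adjacent_intervals
        (hcont1.intervalIntegrable _ _) (hcont1.intervalIntegrable _ _)]
    have hneg : (∫ u in (-w)..(0:ℝ), 2 * u * Real.sqrt (1 - (u + m) ^ 2))
        = ∫ u in (0:ℝ)..w, 2 * (-u) * Real.sqrt (1 - (-u + m) ^ 2) := by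
      have := intervalIntegral.integral_comp_neg (a := (0:ℝ)) (b := w)
        (fun u => 2 * u * Real.sqrt (1 - (u + m) ^ 2))
      rw [this, neg_zero]
    rw [hsplit, hneg, ← intervalIntegral.integral_add
      ((by continuity : Continuous fun u : ℝ =>
        2 * (-u) * Real.sqrt (1 - (-u + m) ^ 2)).intervalIntegrable _ _)
      (hcont1.intervalIntegrable _ _)]
    refine intervalIntegral.integral_nonneg hw0 (fun u hu => ?_)
    have hu0 : 0 ≤ u := hu.1
    have hle : (m + u) ^ 2 ≤ (m - u) ^ 2 := by nlinarith
    have hsqle : Real.sqrt (1 - (-u + m) ^ 2) ≤ Real.sqrt (1 - (u + m) ^ 2) := by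
      apply Real.sqrt_le_sqrt; nlinarith
    have : 2 * (-u) * Real.sqrt (1 - (-u + m) ^ 2) + 2 * u * Real.sqrt (1 - (u + m) ^ 2)
        = 2 * u * (Real.sqrt (1 - (u + m) ^ 2) - Real.sqrt (1 - (-u + m) ^ 2)) := by ring
    rw [this]
    have := sub_nonneg.2 hsqle
    positivity
  linarith

lemma centroid_bounds {z : ℝ} (hz : -1 < z) (hz1 : z < 1) :
    (z - 1) / 2 ≤ diskCentroid z ∧ diskCentroid z ≤ 0 := by
  have hM : 0 < diskMass z := diskMass_pos hz hz1.le
  constructor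
  · rw [diskCentroid, le_div_iff₀ hM]
    exact momInt_ge hz.le hz1.le
  · rw [diskCentroid_eq hz.le hz1.le]
    apply div_nonpos_of_nonpos_of_nonneg _ hM.le
    have := Real.sqrt_nonneg (1 - z ^ 2)
    nlinarith [pow_nonneg this 3]

lemma centroid_hasDeriv {z : ℝ} (hz : -1 < z) (hz1 : z < 1) :
    HasDerivAt diskCentroid
      (3 * (diskCentroid z ^ 2 - z * diskCentroid z) / (1 - z ^ 2)) z := by
  have hM : 0 < diskMass z := diskMass_pos hz hz1.le
  have hpos : 0 < 1 - z ^ 2 := by nlinarith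
  have hs : 0 < Real.sqrt (1 - z ^ 2) := Real.sqrt_pos.2 hpos
  set s : ℝ := Real.sqrt (1 - z ^ 2) with hsdef
  have hsq : s ^ 2 = 1 - z ^ 2 := Real.sq_sqrt hpos.le
  -- derivative of mass
  have hMd : HasDerivAt diskMass (2 * s) z :=
    (contMassInt.integral_hasStrictDerivAt (-1) z).hasDerivAt
  -- derivative of moment
  have hNd : HasDerivAt (fun z => ∫ x in (-1 : ℝ)..z, 2 * x * Real.sqrt (1 - x ^ 2))
      (2 * z * s) z :=
    (contMomInt.integral_hasStrictDerivAt (-1) z).hasDerivAt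
  have hdiv : HasDerivAt diskCentroid
      ((2 * z * s * diskMass z
        - (∫ x in (-1 : ℝ)..z, 2 * x * Real.sqrt (1 - x ^ 2)) * (2 * s)) / diskMass z ^ 2) z :=
    hNd.div hMd hM.ne'
  have hNval : (∫ x in (-1 : ℝ)..z, 2 * x * Real.sqrt (1 - x ^ 2)) = -(2 / 3) * s ^ 3 :=
    momInt_eq hz.le hz1.le
  have hc : diskCentroid z = -(2 / 3) * s ^ 3 / diskMass z := diskCentroid_eq hz.le hz1.le
  have heq : (2 * z * s * diskMass z
        - (∫ x in (-1 : ℝ)..z, 2 * x * Real.sqrt (1 - x ^ 2)) * (2 * s)) / diskMass z ^ 2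
      = 3 * (diskCentroid z ^ 2 - z * diskCentroid z) / (1 - z ^ 2) := by
    rw [hNval, hc, ← hsq]
    field_simp
    ring
  rw [heq] at hdiv
  exact hdiv

theorem diskCentroid_sub_id_strictAnti :
    StrictAntiOn (fun z => diskCentroid z - z) (Set.Ioo (-1 : ℝ) 1) ∧
    ∀ z ∈ Set.Ioo (-1 : ℝ) 1,
      HasDerivAt (fun z => diskCentroid z - z)
        (3 * (diskCentroid z ^ 2 - z * diskCentroid z) / (1 - z ^ 2) - 1) z ∧
      3 * (diskCentroid z ^ 2 - z * diskCentroid z) / (1 - z ^ 2) - 1 ≤ -(1 / 4) := by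
  have main : ∀ z ∈ Set.Ioo (-1 : ℝ) 1,
      HasDerivAt (fun z => diskCentroid z - z)
        (3 * (diskCentroid z ^ 2 - z * diskCentroid z) / (1 - z ^ 2) - 1) z ∧
      3 * (diskCentroid z ^ 2 - z * diskCentroid z) / (1 - z ^ 2) - 1 ≤ -(1 / 4) := by
    intro z hz
    obtain ⟨hz1, hz2⟩ := hz
    have hd : HasDerivAt (fun z => diskCentroid z - z)
        (3 * (diskCentroid z ^ 2 - z * diskCentroid z) / (1 - z ^ 2) - 1) z :=
      (centroid_hasDeriv hz1 hz2).sub (hasDerivAt_id z)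
    refine ⟨hd, ?_⟩
    obtain ⟨hb1, hb2⟩ := centroid_bounds hz1 hz2
    have hpos : 0 < 1 - z ^ 2 := by nlinarith
    set c := diskCentroid z
    rw [sub_le_iff_le_add, div_le_iff₀ hpos]
    nlinarith [mul_nonneg (sub_nonneg.2 hb1) (neg_nonneg.2 hb2),
      mul_nonneg (mul_nonneg (sub_nonneg.2 hb1) (neg_nonneg.2 hb2)) (by linarith : (0:ℝ) ≤ z + 1),
      sq_nonneg (c - (z - 1) / 2), sq_nonneg c]
  refine ⟨?_, main⟩
  have hconv : Convex ℝ (Set.Ioo (-1 : ℝ) 1) := convex_Ioo _ _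
  refine StrictAntiOn.mono ?_ (le_refl _)
  refine strictAntiOn_of_deriv_neg hconv ?_ ?_
  · intro z hz
    exact ((main z hz).1.differentiableAt.continuousAt).continuousWithinAt
  · intro z hz
    rw [interior_Ioo] at hz
    rw [(main z hz).1.deriv]
    have := (main z hz).2
    linarith
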